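/- Let N: A → B be a quantum channel that is covariant with respect to {(U(g), V(g))}_{g∈G} for a finite group G, where {U(g)}_{g∈G} is a unitary 1-design on ℂ^{|A|}. Then the Holevo information of N satisfies χ(N) = S(N(π_A)) − min over pure states ψ on A of S(N(ψ)), where π_A = I/|A| is the maximally mixed state. -/

import Mathlib

open scoped BigOperators Kronecker ComplexOrder
open Matrix MeasureTheory Filter

noncomputable section

abbrev Mat (n : ℕ) := Matrix (Fin n) (Fin n) ℂ

/-- A density matrix: positive semidefinite with unit trace. -/
def IsDensity {ι : Type} [Fintype ι] (ρ : Matrix ι ι ℂ) : Prop :=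
  ρ.PosSemidef ∧ ρ.trace = 1

/-- The trace norm ‖M‖₁ = tr √(MᴴM). -/
def traceNorm {ι : Type} [Fintype ι] [DecidableEq ι] (M : Matrix ι ι ℂ) : ℝ :=
  (((Matrix.posSemidef_conjTranspose_mul_self M).1.eigenvectorUnitary : Matrix ι ι ℂ)
    * Matrix.diagonal (fun i =>
      ((Real.sqrt ((Matrix.posSemidef_conjTranspose_mul_self M).1.eigenvalues i) : ℝ) : ℂ))
    * (star (Matrix.posSemidef_conjTranspose_mul_self M).1.eigenvectorUnitary : Matrix ι ι ℂ)).trace.re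

/-- The rank-one operator |v⟩⟨v| associated to a vector. -/
def vecState {ι : Type} (v : ι → ℂ) : Matrix ι ι ℂ :=
  Matrix.of fun i j => v i * star (v j)

/-- Partial trace over the first tensor factor. -/
def ptraceLeft {R A : Type} [Fintype R] (M : Matrix (R × A) (R × A) ℂ) : Matrix A A ℂ :=
  Matrix.of fun a a' => ∑ r, M (r, a) (r, a')

/-- Partial trace over the second tensor factor. -/
def ptraceRight {A E : Type} [Fintype E] (M : Matrix (A × E) (A × E) ℂ) : Matrix A A ℂ :=
  Matrix.of fun a a' => ∑ e, M (a, e) (a', e)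

/-- The extension id_R ⊗ Φ of a linear map on matrices. -/
def idTensor {R A B : Type} (Φ : Matrix A A ℂ →ₗ[ℂ] Matrix B B ℂ) :
    Matrix (R × A) (R × A) ℂ →ₗ[ℂ] Matrix (R × B) (R × B) ℂ where
  toFun M := Matrix.of fun p q => Φ (Matrix.of fun a a' => M (p.1, a) (q.1, a')) p.2 q.2
  map_add' M N := by
    ext p q
    have h : (Matrix.of fun a a' => M (p.1, a) (q.1, a') + N (p.1, a) (q.1, a'))
        = (Matrix.of fun a a' => M (p.1, a) (q.1, a'))
          + (Matrix.of fun a a' => N (p.1, a) (q.1, a')) := by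
      ext a a'; simp [Matrix.add_apply]
    simp only [Matrix.of_apply, Matrix.add_apply]
    rw [h, map_add]
    simp [Matrix.add_apply]
  map_smul' c M := by
    ext p q
    have h : (Matrix.of fun a a' => c • M (p.1, a) (q.1, a'))
        = c • (Matrix.of fun a a' => M (p.1, a) (q.1, a')) := by
      ext a a'; simp [Matrix.smul_apply]
    simp only [Matrix.of_apply, Matrix.smul_apply]
    rw [h, Φ.map_smul]
    simp [Matrix.smul_apply]

/-- A linear map is completely positive and trace preserving (a quantum channel). -/
def IsCPTP {A B : Type} [Fintype A] [Fintype B] (Φ : Matrix A A ℂ →ₗ[ℂ] Matrix B B ℂ) : Prop :=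
  (∀ (r : ℕ) (M : Matrix (Fin r × A) (Fin r × A) ℂ), M.PosSemidef → (idTensor Φ M).PosSemidef)
    ∧ ∀ M : Matrix A A ℂ, (Φ M).trace = M.trace

/-- The tensor product Φ ⊗ Ψ of two linear maps on matrices. -/
def tensorMap {A B C D : Type} [Fintype A] [DecidableEq A] [Fintype C]
    (Φ : Matrix A A ℂ →ₗ[ℂ] Matrix B B ℂ) (Ψ : Matrix C C ℂ →ₗ[ℂ] Matrix D D ℂ) :
    Matrix (A × C) (A × C) ℂ →ₗ[ℂ] Matrix (B × D) (B × D) ℂ where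
  toFun M := Matrix.of fun p q => ∑ a : A, ∑ a' : A,
      Φ (Matrix.single a a' 1) p.1 q.1
        * Ψ (Matrix.of fun c c' => M (a, c) (a', c')) p.2 q.2
  map_add' M N := by
    ext p q
    have h : ∀ a a' : A, (Matrix.of fun c c' => M (a, c) (a', c') + N (a, c) (a', c'))
        = (Matrix.of fun c c' => M (a, c) (a', c'))
          + (Matrix.of fun c c' => N (a, c) (a', c')) := by
      intro a a'; ext c c'; simp [Matrix.add_apply]
    simp only [Matrix.of_apply, Matrix.add_apply]
    rw [← Finset.sum_add_distrib]
    refine Finset.sum_congr rfl fun a _ => ?_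
    rw [← Finset.sum_add_distrib]
    refine Finset.sum_congr rfl fun a' _ => ?_
    rw [h a a', map_add]
    simp [Matrix.add_apply, mul_add]
  map_smul' k M := by
    ext p q
    have h : ∀ a a' : A, (Matrix.of fun c c' => k * M (a, c) (a', c'))
        = k • (Matrix.of fun c c' => M (a, c) (a', c')) := by
      intro a a'; ext c c'; simp [Matrix.smul_apply, smul_eq_mul]
    simp only [Matrix.of_apply, Matrix.smul_apply, smul_eq_mul, RingHom.id_apply]
    rw [Finset.mul_sum]
    refine Finset.sum_congr rfl fun a _ => ?_
    rw [Finset.mul_sum]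
    refine Finset.sum_congr rfl fun a' _ => ?_
    rw [h a a', Ψ.map_smul]
    simp only [Matrix.smul_apply, smul_eq_mul]
    ring
  
/-- The n-fold tensor power Φ^{⊗n} of a linear map on matrices. -/
def powMap {A B : Type} [Fintype A] [DecidableEq A] [Fintype B] [DecidableEq B]
    (Φ : Matrix A A ℂ →ₗ[ℂ] Matrix B B ℂ) :
    (n : ℕ) → (Matrix (Fin n → A) (Fin n → A) ℂ →ₗ[ℂ] Matrix (Fin n → B) (Fin n → B) ℂ)
  | 0 => (Matrix.reindexLinearEquiv ℂ ℂ (Equiv.ofUnique (Fin 0 → A) (Fin 0 → B))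
      (Equiv.ofUnique (Fin 0 → A) (Fin 0 → B))).toLinearMap
  | (n + 1) =>
      (Matrix.reindexLinearEquiv ℂ ℂ (Fin.consEquiv fun _ : Fin (n + 1) => B).symm.symm
          (Fin.consEquiv fun _ : Fin (n + 1) => B).symm.symm).toLinearMap
        ∘ₗ tensorMap Φ (powMap Φ n)
        ∘ₗ (Matrix.reindexLinearEquiv ℂ ℂ (Fin.consEquiv fun _ : Fin (n + 1) => A).symm
          (Fin.consEquiv fun _ : Fin (n + 1) => A).symm).toLinearMap

open scoped Classical in
/-- The von Neumann entropy (base 2), via the eigenvalues of a Hermitian matrix. -/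
def vnEntropy {ι : Type} [Fintype ι] [DecidableEq ι] (ρ : Matrix ι ι ℂ) : ℝ :=
  if h : ρ.IsHermitian then ∑ i, -(h.eigenvalues i * Real.logb 2 (h.eigenvalues i)) else 0

/-- The function g(ε) = (1+ε)log₂(1+ε) − ε log₂ ε (with the convention 0·log 0 = 0). -/
def gfun (x : ℝ) : ℝ := (1 + x) * Real.logb 2 (1 + x) - x * Real.logb 2 x

/-- A finite ensemble of density matrices. -/
structure Ensemble (A : Type) [Fintype A] where
  m : ℕ
  p : Fin m → ℝ
  p_nonneg : ∀ i, 0 ≤ p i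
  p_sum : ∑ i, p i = 1
  ρ : Fin m → Matrix A A ℂ
  ρ_density : ∀ i, IsDensity (ρ i)

/-- A finite ensemble of pure states, given by unit vectors. -/
structure PureEnsemble (A : Type) [Fintype A] where
  m : ℕ
  p : Fin m → ℝ
  p_nonneg : ∀ i, 0 ≤ p i
  p_sum : ∑ i, p i = 1
  v : Fin m → (A → ℂ)
  pure : ∀ i, IsDensity (vecState (v i))

/-- The Holevo information of a (channel given as a) linear map. -/
def holevoMap {A B : Type} [Fintype A] [Fintype B] [DecidableEq B]
    (Φ : Matrix A A ℂ →ₗ[ℂ] Matrix B B ℂ) : ℝ :=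
  ⨆ e : Ensemble A,
    (vnEntropy (Φ (∑ i, (e.p i : ℂ) • e.ρ i)) - ∑ i, e.p i * vnEntropy (Φ (e.ρ i)))

/-- The classical capacity: the regularized Holevo information. -/
def classicalCapacity {A B : Type} [Fintype A] [DecidableEq A] [Fintype B] [DecidableEq B]
    (Φ : Matrix A A ℂ →ₗ[ℂ] Matrix B B ℂ) : ℝ :=
  Filter.limsup (fun n : ℕ => holevoMap (powMap Φ n) / (n : ℝ)) Filter.atTop

/-- Half the diamond norm of the difference of two maps:
the supremum over reference sizes and density inputs of half the output trace distance. -/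
def diamondDist {A B : Type} [Fintype A] [Fintype B] [DecidableEq B]
    (Φ Ψ : Matrix A A ℂ →ₗ[ℂ] Matrix B B ℂ) : ℝ :=
  ⨆ r : ℕ, ⨆ ρ : {ρ : Matrix (Fin r × A) (Fin r × A) ℂ // IsDensity ρ},
    (1 / 2) * traceNorm (idTensor Φ ρ.1 - idTensor Ψ ρ.1)

/-- The diamond norm of the difference of two maps (without the factor 1/2). -/
def diamondDistFull {A B : Type} [Fintype A] [Fintype B] [DecidableEq B]
    (Φ Ψ : Matrix A A ℂ →ₗ[ℂ] Matrix B B ℂ) : ℝ :=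
  ⨆ r : ℕ, ⨆ ρ : {ρ : Matrix (Fin r × A) (Fin r × A) ℂ // IsDensity ρ},
    traceNorm (idTensor Φ ρ.1 - idTensor Ψ ρ.1)

/-- Conjugation ρ ↦ W ρ Wᴴ as a linear map. -/
def conjMap {ι κ : Type} [Fintype ι] [Fintype κ] (W : Matrix κ ι ℂ) :
    Matrix ι ι ℂ →ₗ[ℂ] Matrix κ κ ℂ where
  toFun ρ := W * ρ * Wᴴ
  map_add' ρ σ := by simp [Matrix.mul_add, Matrix.add_mul]
  map_smul' c ρ := by simp [Matrix.mul_smul, Matrix.smul_mul]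

/-- A classical–quantum state ∑ₓ p(x) |x⟩⟨x| ⊗ ρ(x). -/
def cqState {X ι : Type} [DecidableEq X] (p : X → ℝ) (ρ : X → Matrix ι ι ℂ) :
    Matrix (X × ι) (X × ι) ℂ :=
  Matrix.of fun a b => if a.1 = b.1 then (p a.1 : ℂ) * ρ a.1 a.2 b.2 else 0

/-- A generalized divergence: a family of real functionals on pairs of matrices, one for each
finite-dimensional system, satisfying the data-processing inequality under quantum channels. -/
structure GenDivergence where
  D : ∀ {ι : Type} [Fintype ι] [DecidableEq ι], Matrix ι ι ℂ → Matrix ι ι ℂ → ℝ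
  data_proc : ∀ {ι κ : Type} [Fintype ι] [DecidableEq ι] [Fintype κ] [DecidableEq κ]
      (Λ : Matrix ι ι ℂ →ₗ[ℂ] Matrix κ κ ℂ), IsCPTP Λ →
      ∀ ρ σ : Matrix ι ι ℂ, IsDensity ρ → σ.PosSemidef → D (Λ ρ) (Λ σ) ≤ D ρ σ

/-- The direct-sum property of a generalized divergence on classical–quantum states. -/
def HasDirectSum (𝒟 : GenDivergence) : Prop :=
  ∀ {X ι : Type} [Fintype X] [DecidableEq X] [Fintype ι] [DecidableEq ι]
    (p : X → ℝ), (∀ x, 0 ≤ p x) → (∑ x, p x) = 1 →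
    ∀ (ρ σ : X → Matrix ι ι ℂ), (∀ x, IsDensity (ρ x)) → (∀ x, IsDensity (σ x)) →
    𝒟.D (cqState p ρ) (cqState p σ) = ∑ x, p x * 𝒟.D (ρ x) (σ x)

/-- The generalized channel divergence: optimization over pure inputs with reference R ≅ A. -/
def chanDiv (𝒟 : GenDivergence) {A B : Type} [Fintype A] [DecidableEq A]
    [Fintype B] [DecidableEq B] (Φ Ψ : Matrix A A ℂ →ₗ[ℂ] Matrix B B ℂ) : ℝ :=
  ⨆ v : {v : A × A → ℂ // IsDensity (vecState v)},
    𝒟.D (idTensor Φ (vecState v.1)) (idTensor Ψ (vecState v.1))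

/-- The maximally entangled state on A ⊗ A. -/
def maxEnt (A : Type) [Fintype A] [DecidableEq A] : Matrix (A × A) (A × A) ℂ :=
  vecState (fun p => if p.1 = p.2 then (((Real.sqrt (Fintype.card A))⁻¹ : ℝ) : ℂ) else 0)

/-- The Choi operator of a linear map on matrices. -/
def choi {A B : Type} [Fintype A] [DecidableEq A]
    (Φ : Matrix A A ℂ →ₗ[ℂ] Matrix B B ℂ) : Matrix (A × B) (A × B) ℂ :=
  idTensor Φ (Matrix.of fun p q => if p.1 = p.2 ∧ q.1 = q.2 then 1 else 0)

/-- Separability of a bipartite operator: a finite sum of tensor products of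
positive semidefinite operators. -/
def IsSepState {A B : Type} [Fintype A] [Fintype B]
    (M : Matrix (A × B) (A × B) ℂ) : Prop :=
  ∃ (k : ℕ) (P : Fin k → Matrix A A ℂ) (Q : Fin k → Matrix B B ℂ),
    (∀ i, (P i).PosSemidef) ∧ (∀ i, (Q i).PosSemidef) ∧ M = ∑ i, P i ⊗ₖ Q i

/-- An entanglement-breaking channel: a channel whose Choi operator is separable. -/
def IsEBChannel {A B : Type} [Fintype A] [DecidableEq A] [Fintype B]
    (Φ : Matrix A A ℂ →ₗ[ℂ] Matrix B B ℂ) : Prop :=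
  IsCPTP Φ ∧ IsSepState (choi Φ)

/-- φ is a purification (with reference system R on the left) of the state ρ. -/
def IsPurification {R A : Type} [Fintype R] [Fintype A]
    (φ : Matrix (R × A) (R × A) ℂ) (ρ : Matrix A A ℂ) : Prop :=
  (∃ v : R × A → ℂ, φ = vecState v) ∧ IsDensity φ ∧ ptraceLeft φ = ρ

/-- The channel ρ ↦ tr_E (V ρ Vᴴ) induced by an isometry V : A → B ⊗ E. -/
def dilMap {A B E : Type} [Fintype A] [Fintype B] [Fintype E]
    (V : Matrix (B × E) A ℂ) : Matrix A A ℂ →ₗ[ℂ] Matrix B B ℂ where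
  toFun ρ := ptraceRight (V * ρ * Vᴴ)
  map_add' ρ σ := by
    ext a a'
    simp [ptraceRight, Matrix.mul_add, Matrix.add_mul, Matrix.add_apply,
      Finset.sum_add_distrib]
  map_smul' c ρ := by
    ext a a'
    simp [ptraceRight, Matrix.mul_smul, Matrix.smul_mul, Matrix.smul_apply,
      Finset.mul_sum, smul_eq_mul]

/-- The complementary channel ρ ↦ tr_B (V ρ Vᴴ) induced by an isometry V : A → B ⊗ E. -/
def complMap {A B E : Type} [Fintype A] [Fintype B] [Fintype E]
    (V : Matrix (B × E) A ℂ) : Matrix A A ℂ →ₗ[ℂ] Matrix E E ℂ where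
  toFun ρ := ptraceLeft (V * ρ * Vᴴ)
  map_add' ρ σ := by
    ext a a'
    simp [ptraceLeft, Matrix.mul_add, Matrix.add_mul, Matrix.add_apply,
      Finset.sum_add_distrib]
  map_smul' c ρ := by
    ext a a'
    simp [ptraceLeft, Matrix.mul_smul, Matrix.smul_mul, Matrix.smul_apply,
      Finset.mul_sum, smul_eq_mul]

/-- A Hadamard channel: some Stinespring dilation has entanglement-breaking complement. -/
def IsHadamardChan {A B : Type} [Fintype A] [DecidableEq A] [Fintype B] [DecidableEq B]
    (Φ : Matrix A A ℂ →ₗ[ℂ] Matrix B B ℂ) : Prop :=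
  ∃ (e : ℕ) (V : Matrix (B × Fin e) A ℂ), Vᴴ * V = 1 ∧
    (∀ ρ, Φ ρ = ptraceRight (V * ρ * Vᴴ)) ∧ IsSepState (choi (complMap V))

/-- Covariance of a channel with respect to unitary representations of a group. -/
def CovariantChan {G A B : Type} [Group G] [Fintype A] [DecidableEq A]
    [Fintype B] [DecidableEq B]
    (U : G →* Matrix.unitaryGroup A ℂ) (V : G →* Matrix.unitaryGroup B ℂ)
    (Φ : Matrix A A ℂ →ₗ[ℂ] Matrix B B ℂ) : Prop :=
  ∀ (g : G) (ρ : Matrix A A ℂ),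
    (V g : Matrix B B ℂ) * Φ ρ * (V g : Matrix B B ℂ)ᴴ
      = Φ ((U g : Matrix A A ℂ) * ρ * (U g : Matrix A A ℂ)ᴴ)

/-- A unitary 1-design: averaging over the group sends every matrix to tr(ρ)·I/d. -/
def IsOneDesign {G A : Type} [Group G] [Fintype G] [Fintype A] [DecidableEq A]
    (U : G →* Matrix.unitaryGroup A ℂ) : Prop :=
  ∀ ρ : Matrix A A ℂ,
    (Fintype.card G : ℂ)⁻¹ • ∑ g, (U g : Matrix A A ℂ) * ρ * (U g : Matrix A A ℂ)ᴴ
      = (ρ.trace * (Fintype.card A : ℂ)⁻¹) • (1 : Matrix A A ℂ)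

/-- Pauli X. -/
def σX : Mat 2 := !![0, 1; 1, 0]
/-- Pauli Y. -/
def σY : Mat 2 := !![0, -Complex.I; Complex.I, 0]
/-- Pauli Z. -/
def σZ : Mat 2 := !![1, 0; 0, -1]

/-- The Pauli twirl of a qubit channel. -/
def pauliTwirl (Φ : Mat 2 →ₗ[ℂ] Mat 2) : Mat 2 →ₗ[ℂ] Mat 2 :=
  ((4 : ℂ)⁻¹) • (Φ + conjMap σX ∘ₗ Φ ∘ₗ conjMap σX + conjMap σY ∘ₗ Φ ∘ₗ conjMap σY
    + conjMap σZ ∘ₗ Φ ∘ₗ conjMap σZ)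

/-- The amplitude damping channel with damping parameter p. -/
def ampDamp (p : ℝ) : Mat 2 →ₗ[ℂ] Mat 2 :=
  conjMap (!![1, 0; 0, ((Real.sqrt (1 - p) : ℝ) : ℂ)] : Mat 2)
    + conjMap (!![0, ((Real.sqrt p : ℝ) : ℂ); 0, 0] : Mat 2)

/-- The qubit depolarizing channel with parameter p. -/
def depol (p : ℝ) : Mat 2 →ₗ[ℂ] Mat 2 :=
  (((1 - p : ℝ) : ℂ)) • LinearMap.id
    + (((p / 3 : ℝ) : ℂ)) • (conjMap σX + conjMap σY + conjMap σZ)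

/-- The Z-dephasing channel with parameter p. -/
def deph (p : ℝ) : Mat 2 →ₗ[ℂ] Mat 2 :=
  (((1 - p : ℝ) : ℂ)) • LinearMap.id + ((p : ℝ) : ℂ) • conjMap σZ

/-- The entanglement-breaking parameter: distance to the nearest EB channel. -/
def ebParam {A B : Type} [Fintype A] [DecidableEq A] [Fintype B] [DecidableEq B]
    (Φ : Matrix A A ℂ →ₗ[ℂ] Matrix B B ℂ) : ℝ :=
  ⨅ M : {M : Matrix A A ℂ →ₗ[ℂ] Matrix B B ℂ // IsEBChannel M}, diamondDist Φ M.1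

end

section AuxProof
lemma unit_conj_mul {n : Type} [Fintype n] [DecidableEq n] (W : Matrix.unitaryGroup n ℂ) :
    (W : Matrix n n ℂ)ᴴ * W = 1 := by
  rw [← Matrix.star_eq_conjTranspose]; exact Matrix.UnitaryGroup.star_mul_self W

lemma unit_mul_conj {n : Type} [Fintype n] [DecidableEq n] (W : Matrix.unitaryGroup n ℂ) :
    (W : Matrix n n ℂ) * Wᴴ = 1 := by
  rw [← Matrix.star_eq_conjTranspose]; exact W.2.2

lemma trace_eq_sum_eigen {n : Type} [Fintype n] [DecidableEq n] {A : Matrix n n ℂ}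
    (hA : A.IsHermitian) : A.trace = ∑ i, (hA.eigenvalues i : ℂ) := by
  conv_lhs => rw [hA.spectral_theorem]
  rw [Unitary.conjStarAlgAut_apply]
  rw [Matrix.trace_mul_cycle, Matrix.UnitaryGroup.star_mul_self, one_mul, Matrix.trace_diagonal]
  simp

lemma psd_diag_re_nonneg {n : Type} [Fintype n] [DecidableEq n] {A : Matrix n n ℂ}
    (hA : A.PosSemidef) (j : n) : 0 ≤ (A j j).re := by
  have h := hA.dotProduct_mulVec_nonneg (Pi.single j 1)
  simp [dotProduct, Matrix.mulVec, Pi.single_apply] at h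
  exact (Complex.le_def.mp h).1

lemma psd_diag_im_zero {n : Type} [Fintype n] [DecidableEq n] {A : Matrix n n ℂ}
    (hA : A.PosSemidef) (j : n) : (A j j).im = 0 := by
  have h := hA.dotProduct_mulVec_nonneg (Pi.single j 1)
  simp [dotProduct, Matrix.mulVec, Pi.single_apply] at h
  exact ((Complex.le_def.mp h).2).symm

lemma vnEntropy_aux_eq {ι : Type} [Fintype ι] [DecidableEq ι] {ρ : Matrix ι ι ℂ} (h : ρ.IsHermitian) :
    vnEntropy ρ = (∑ i, Real.negMulLog (h.eigenvalues i)) / Real.log 2 := by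
  rw [vnEntropy, dif_pos h, Finset.sum_div]
  refine Finset.sum_congr rfl fun i _ => ?_
  rw [Real.negMulLog, Real.logb]
  ring

lemma jensen_row {n : Type} [Fintype n] (w : n → ℝ) (μ : n → ℝ)
    (hw : ∀ k, 0 ≤ w k) (hw1 : ∑ k, w k = 1) (hμ : ∀ k, 0 ≤ μ k) :
    ∑ k, w k * Real.negMulLog (μ k) ≤ Real.negMulLog (∑ k, w k * μ k) := by
  have := Real.concaveOn_negMulLog.le_map_sum (t := Finset.univ) (w := w) (p := μ)
    (fun k _ => hw k) hw1 (fun k _ => hμ k)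
  simpa [smul_eq_mul] using this

lemma conj_diag_entry {n : Type} [Fintype n] [DecidableEq n] (M : Matrix n n ℂ) (μ : n → ℝ)
    (j : n) : ((M * Matrix.diagonal (Complex.ofReal ∘ μ) * Mᴴ) j j).re
      = ∑ k, Complex.normSq (M j k) * μ k := by
  rw [Matrix.mul_apply]
  rw [Complex.re_sum]
  refine Finset.sum_congr rfl fun k _ => ?_
  rw [Matrix.mul_diagonal, Matrix.conjTranspose_apply]
  have : M j k * (Complex.ofReal ∘ μ) k * star (M j k)
      = ((Complex.normSq (M j k) * μ k : ℝ) : ℂ) := by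
    have h2 : M j k * (Complex.ofReal ∘ μ) k * star (M j k)
        = (M j k * star (M j k)) * (μ k : ℂ) := by simp only [Function.comp_apply]; ring
    rw [h2, Complex.star_def, Complex.mul_conj]
    push_cast; ring
  rw [this, Complex.ofReal_re]

lemma row_normSq_sum {n : Type} [Fintype n] [DecidableEq n] {M : Matrix n n ℂ}
    (h : M * Mᴴ = 1) (j : n) : ∑ k, Complex.normSq (M j k) = 1 := by
  have := congrArg (fun X : Matrix n n ℂ => (X j j).re) h
  simp only [Matrix.mul_apply, Matrix.conjTranspose_apply, Matrix.one_apply_eq, Complex.one_re] at this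
  rw [← this, Complex.re_sum]
  refine Finset.sum_congr rfl fun k _ => ?_
  rw [Complex.star_def, Complex.mul_conj, Complex.ofReal_re]

lemma col_normSq_sum {n : Type} [Fintype n] [DecidableEq n] {M : Matrix n n ℂ}
    (h : Mᴴ * M = 1) (k : n) : ∑ j, Complex.normSq (M j k) = 1 := by
  have := congrArg (fun X : Matrix n n ℂ => (X k k).re) h
  simp only [Matrix.mul_apply, Matrix.conjTranspose_apply, Matrix.one_apply_eq, Complex.one_re] at this
  rw [← this, Complex.re_sum]
  refine Finset.sum_congr rfl fun j _ => ?_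
  rw [mul_comm, Complex.star_def, Complex.mul_conj, Complex.ofReal_re]

lemma pinching {n : Type} [Fintype n] [DecidableEq n] {ρ : Matrix n n ℂ}
    (hρ : ρ.PosSemidef) (W : Matrix.unitaryGroup n ℂ) :
    ∑ i, Real.negMulLog (hρ.1.eigenvalues i)
      ≤ ∑ j, Real.negMulLog (((W : Matrix n n ℂ)ᴴ * ρ * W) j j).re := by
  set V : Matrix n n ℂ := (hρ.1.eigenvectorUnitary : Matrix n n ℂ) with hV
  set μ : n → ℝ := hρ.1.eigenvalues
  set M : Matrix n n ℂ := (W : Matrix n n ℂ)ᴴ * V with hM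
  have hVc : V * Vᴴ = 1 := unit_mul_conj _
  have hVc' : Vᴴ * V = 1 := unit_conj_mul _
  have hWc : (W : Matrix n n ℂ) * Wᴴ = 1 := unit_mul_conj W
  have hWc' : (W : Matrix n n ℂ)ᴴ * W = 1 := unit_conj_mul W
  have hM1 : M * Mᴴ = 1 := by
    rw [hM, Matrix.conjTranspose_mul, Matrix.conjTranspose_conjTranspose]
    calc (W : Matrix n n ℂ)ᴴ * V * (Vᴴ * W) = (W : Matrix n n ℂ)ᴴ * (V * Vᴴ) * W := by
          simp [Matrix.mul_assoc]
      _ = 1 := by rw [hVc, Matrix.mul_one, hWc']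
  have hM2 : Mᴴ * M = 1 := by
    rw [hM, Matrix.conjTranspose_mul, Matrix.conjTranspose_conjTranspose]
    calc Vᴴ * (W : Matrix n n ℂ) * ((W : Matrix n n ℂ)ᴴ * V)
        = Vᴴ * ((W : Matrix n n ℂ) * (W : Matrix n n ℂ)ᴴ) * V := by simp [Matrix.mul_assoc]
      _ = 1 := by rw [hWc, Matrix.mul_one, hVc']
  have key : (W : Matrix n n ℂ)ᴴ * ρ * W = M * Matrix.diagonal (Complex.ofReal ∘ μ) * Mᴴ := by
    conv_lhs => rw [hρ.1.spectral_theorem]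
    rw [hM, Matrix.conjTranspose_mul, Matrix.conjTranspose_conjTranspose]
    rw [Unitary.conjStarAlgAut_apply]
    rw [Matrix.star_eq_conjTranspose]
    simp only [Matrix.mul_assoc, hV]
    rfl
  have hentry : ∀ j, (((W : Matrix n n ℂ)ᴴ * ρ * W) j j).re
      = ∑ k, Complex.normSq (M j k) * μ k := by
    intro j; rw [key]; exact conj_diag_entry M μ j
  have step1 : ∀ j, ∑ k, Complex.normSq (M j k) * Real.negMulLog (μ k)
      ≤ Real.negMulLog ((((W : Matrix n n ℂ)ᴴ * ρ * W) j j).re) := by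
    intro j; rw [hentry j]
    exact jensen_row _ _ (fun k => Complex.normSq_nonneg _) (row_normSq_sum hM1 j)
      (fun k => hρ.eigenvalues_nonneg k)
  calc ∑ i, Real.negMulLog (μ i)
      = ∑ k, (∑ j, Complex.normSq (M j k)) * Real.negMulLog (μ k) := by
        refine Finset.sum_congr rfl fun k _ => ?_
        rw [col_normSq_sum hM2 k, one_mul]
    _ = ∑ j, ∑ k, Complex.normSq (M j k) * Real.negMulLog (μ k) := by
        rw [Finset.sum_comm]
        refine Finset.sum_congr rfl fun k _ => ?_
        rw [Finset.sum_mul]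
    _ ≤ _ := Finset.sum_le_sum fun j _ => step1 j

lemma vnEntropy_aux_concave {n κ : Type} [Fintype n] [DecidableEq n] [Fintype κ]
    (p : κ → ℝ) (hp0 : ∀ i, 0 ≤ p i) (hp1 : ∑ i, p i = 1)
    (ρ : κ → Matrix n n ℂ) (hρ : ∀ i, (ρ i).PosSemidef) (htr : ∀ i, (ρ i).trace = 1) :
    ∑ i, p i * vnEntropy (ρ i) ≤ vnEntropy (∑ i, (p i : ℂ) • ρ i) := by
  set σ : Matrix n n ℂ := ∑ i, (p i : ℂ) • ρ i with hσ
  have hσH : σ.IsHermitian := by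
    show σᴴ = σ
    rw [hσ, Matrix.conjTranspose_sum]
    refine Finset.sum_congr rfl fun i _ => ?_
    rw [Matrix.conjTranspose_smul, (hρ i).1.eq]
    congr 1
    exact Complex.conj_ofReal _
  set W := hσH.eigenvectorUnitary with hW
  set lam := hσH.eigenvalues with hlamdef
  have hdiag : (W : Matrix n n ℂ)ᴴ * σ * W = Matrix.diagonal (Complex.ofReal ∘ lam) := by
    rw [← Matrix.star_eq_conjTranspose]
    have := Matrix.IsHermitian.conjStarAlgAut_star_eigenvectorUnitary hσH
    rw [Unitary.conjStarAlgAut_apply, Unitary.coe_star, star_star] at this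
    exact this
  set q : κ → n → ℝ := fun i j => (((W : Matrix n n ℂ)ᴴ * ρ i * W) j j).re with hqdef
  have hq0 : ∀ i j, 0 ≤ q i j := fun i j =>
    psd_diag_re_nonneg ((hρ i).conjTranspose_mul_mul_same _) j
  have hq1 : ∀ i, ∑ j, q i j = 1 := by
    intro i
    have h1 : ((W : Matrix n n ℂ)ᴴ * ρ i * W).trace = 1 := by
      rw [Matrix.trace_mul_cycle, unit_mul_conj W, Matrix.one_mul, htr i]
    have := congrArg Complex.re h1
    rwa [Matrix.trace, Complex.re_sum] at this
  have hexp : ∀ j, lam j = ∑ i, p i * q i j := by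
    intro j
    have h1 : (W : Matrix n n ℂ)ᴴ * σ * W
        = ∑ i, (p i : ℂ) • ((W : Matrix n n ℂ)ᴴ * ρ i * W) := by
      rw [hσ, Matrix.mul_sum, Matrix.sum_mul]
      refine Finset.sum_congr rfl fun i _ => ?_
      rw [Matrix.mul_smul, Matrix.smul_mul]
    have h2 := congrArg (fun X : Matrix n n ℂ => (X j j).re) h1
    simp only [hdiag] at h2
    simp only [Matrix.diagonal_apply_eq, Function.comp_apply, Complex.ofReal_re,
      Matrix.sum_apply, Matrix.smul_apply, Complex.re_sum, smul_eq_mul] at h2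
    rw [h2]
    refine Finset.sum_congr rfl fun i _ => ?_
    rw [Complex.mul_re]
    simp [hqdef]
  have hlam0 : ∀ j, 0 ≤ lam j := by
    intro j
    rw [hexp j]
    exact Finset.sum_nonneg fun i _ => mul_nonneg (hp0 i) (hq0 i j)
  have jensen : ∀ j, ∑ i, p i * Real.negMulLog (q i j) ≤ Real.negMulLog (lam j) := by
    intro j
    rw [hexp j]
    exact jensen_row p (fun i => q i j) hp0 hp1 (fun i => hq0 i j)
  have main : ∑ i, p i * (∑ k, Real.negMulLog ((hρ i).1.eigenvalues k))
      ≤ ∑ j, Real.negMulLog (lam j) := by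
    calc ∑ i, p i * (∑ k, Real.negMulLog ((hρ i).1.eigenvalues k))
        ≤ ∑ i, p i * (∑ j, Real.negMulLog (q i j)) := by
          refine Finset.sum_le_sum fun i _ => ?_
          exact mul_le_mul_of_nonneg_left (pinching (hρ i) W) (hp0 i)
      _ = ∑ j, ∑ i, p i * Real.negMulLog (q i j) := by
          rw [Finset.sum_comm]
          refine Finset.sum_congr rfl fun i _ => ?_
          rw [Finset.mul_sum]
      _ ≤ ∑ j, Real.negMulLog (lam j) := Finset.sum_le_sum fun j _ => jensen j
  have hlog : (0:ℝ) < Real.log 2 := Real.log_pos (by norm_num)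
  rw [vnEntropy_aux_eq hσH]
  have hrw : ∑ i, p i * vnEntropy (ρ i)
      = (∑ i, p i * (∑ k, Real.negMulLog ((hρ i).1.eigenvalues k))) / Real.log 2 := by
    rw [Finset.sum_div]
    refine Finset.sum_congr rfl fun i _ => ?_
    rw [vnEntropy_aux_eq (hρ i).1, mul_div_assoc]
  rw [hrw]
  exact div_le_div_of_nonneg_right main hlog.le

lemma det_resolvent {n : Type} [Fintype n] [DecidableEq n] {ρ : Matrix n n ℂ}
    (hρ : ρ.IsHermitian) (t : ℝ) :
    ((t : ℂ) • (1 : Matrix n n ℂ) - ρ).det = ∏ i, ((t : ℂ) - (hρ.eigenvalues i : ℂ)) := by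
  set U : Matrix n n ℂ := (hρ.eigenvectorUnitary : Matrix n n ℂ)
  have hU : U * Uᴴ = 1 := unit_mul_conj _
  have hU' : Uᴴ * U = 1 := unit_conj_mul _
  have hsplit : (t : ℂ) • (1 : Matrix n n ℂ) - ρ
      = U * ((t : ℂ) • (1 : Matrix n n ℂ) - Matrix.diagonal (Complex.ofReal ∘ hρ.eigenvalues)) * Uᴴ := by
    rw [Matrix.mul_sub, Matrix.sub_mul]
    congr 1
    · rw [Matrix.mul_smul, Matrix.mul_one, Matrix.smul_mul, hU]
    · conv_lhs => rw [hρ.spectral_theorem]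
      rw [Unitary.conjStarAlgAut_apply]
      rw [Matrix.star_eq_conjTranspose]
      rfl
  rw [hsplit, Matrix.det_mul, Matrix.det_mul]
  have hdet1 : U.det * ((t : ℂ) • (1 : Matrix n n ℂ)
      - Matrix.diagonal (Complex.ofReal ∘ hρ.eigenvalues)).det * Uᴴ.det
      = ((t : ℂ) • (1 : Matrix n n ℂ)
      - Matrix.diagonal (Complex.ofReal ∘ hρ.eigenvalues)).det * (Uᴴ.det * U.det) := by ring
  rw [hdet1, ← Matrix.det_mul, hU', Matrix.det_one, mul_one]
  have hdd : (t : ℂ) • (1 : Matrix n n ℂ) - Matrix.diagonal (Complex.ofReal ∘ hρ.eigenvalues)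
      = Matrix.diagonal (fun i => (t : ℂ) - (hρ.eigenvalues i : ℂ)) := by
    ext i j
    by_cases h : i = j
    · subst h; simp [Matrix.diagonal_apply_eq, Matrix.one_apply_eq]
    · simp [Matrix.diagonal_apply_ne _ h, Matrix.one_apply_ne h]
  rw [hdd, Matrix.det_diagonal]

lemma eigen_sum_conj {n : Type} [Fintype n] [DecidableEq n] {ρ : Matrix n n ℂ}
    (hρ : ρ.IsHermitian) (W : Matrix.unitaryGroup n ℂ)
    (hρ' : ((W : Matrix n n ℂ) * ρ * Wᴴ).IsHermitian) (f : ℝ → ℝ) :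
    ∑ i, f (hρ'.eigenvalues i) = ∑ i, f (hρ.eigenvalues i) := by
  have hdet : ∀ t : ℝ, ∏ i, ((t : ℂ) - (hρ'.eigenvalues i : ℂ))
      = ∏ i, ((t : ℂ) - (hρ.eigenvalues i : ℂ)) := by
    intro t
    rw [← det_resolvent hρ t, ← det_resolvent hρ' t]
    have hsplit : (t : ℂ) • (1 : Matrix n n ℂ) - (W : Matrix n n ℂ) * ρ * Wᴴ
        = (W : Matrix n n ℂ) * ((t : ℂ) • (1 : Matrix n n ℂ) - ρ) * Wᴴ := by
      rw [Matrix.mul_sub, Matrix.sub_mul]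
      congr 1
      rw [Matrix.mul_smul, Matrix.mul_one, Matrix.smul_mul, unit_mul_conj W]
    rw [hsplit, Matrix.det_mul, Matrix.det_mul]
    have : (W : Matrix n n ℂ).det * ((t : ℂ) • (1 : Matrix n n ℂ) - ρ).det * (W : Matrix n n ℂ)ᴴ.det
        = ((t : ℂ) • (1 : Matrix n n ℂ) - ρ).det * ((W : Matrix n n ℂ)ᴴ.det * (W : Matrix n n ℂ).det) := by
      ring
    rw [this, ← Matrix.det_mul, unit_conj_mul W, Matrix.det_one, mul_one]
  have hdetR : ∀ t : ℝ, ∏ i, (t - hρ'.eigenvalues i) = ∏ i, (t - hρ.eigenvalues i) := by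
    intro t
    apply Complex.ofReal_injective
    push_cast
    exact hdet t
  have hpoly : ∏ i, (Polynomial.X - Polynomial.C (hρ'.eigenvalues i))
      = ∏ i, (Polynomial.X - Polynomial.C (hρ.eigenvalues i)) := by
    apply Polynomial.funext
    intro t
    simpa [Polynomial.eval_prod] using hdetR t
  have hms : Finset.univ.val.map hρ'.eigenvalues = Finset.univ.val.map hρ.eigenvalues := by
    have h1 := Polynomial.roots_multiset_prod_X_sub_C (Finset.univ.val.map hρ'.eigenvalues)
    have h2 := Polynomial.roots_multiset_prod_X_sub_C (Finset.univ.val.map hρ.eigenvalues)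
    rw [← h1, ← h2]
    congr 1
    rw [Multiset.map_map, Multiset.map_map]
    exact hpoly
  calc ∑ i, f (hρ'.eigenvalues i) = (Finset.univ.val.map (f ∘ hρ'.eigenvalues)).sum := rfl
    _ = ((Finset.univ.val.map hρ'.eigenvalues).map f).sum := by rw [Multiset.map_map]
    _ = ((Finset.univ.val.map hρ.eigenvalues).map f).sum := by rw [hms]
    _ = ∑ i, f (hρ.eigenvalues i) := by rw [Multiset.map_map]; rfl

lemma vnEntropy_aux_conj {n : Type} [Fintype n] [DecidableEq n] {ρ : Matrix n n ℂ}
    (hρ : ρ.IsHermitian) (W : Matrix.unitaryGroup n ℂ) :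
    vnEntropy ((W : Matrix n n ℂ) * ρ * Wᴴ) = vnEntropy ρ := by
  have hρ' : ((W : Matrix n n ℂ) * ρ * Wᴴ).IsHermitian := by
    show _ᴴ = _
    rw [Matrix.conjTranspose_mul, Matrix.conjTranspose_mul,
      Matrix.conjTranspose_conjTranspose, hρ.eq, Matrix.mul_assoc]
  rw [vnEntropy_aux_eq hρ', vnEntropy_aux_eq hρ, eigen_sum_conj hρ W hρ' Real.negMulLog]

lemma psd_real_smul {ι : Type} [Fintype ι] {r : ℝ} (hr : 0 ≤ r) {ρ : Matrix ι ι ℂ}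
    (hρ : ρ.PosSemidef) : ((r : ℂ) • ρ).PosSemidef := by
  constructor
  · show _ᴴ = _
    rw [Matrix.conjTranspose_smul, hρ.1.eq]
    congr 1
    exact Complex.conj_ofReal r
  · intro x
    exact (hρ.smul (Complex.zero_le_real.mpr hr)).2 x

lemma psd_sum {ι κ : Type} [Fintype ι] [Fintype κ] (ρ : κ → Matrix ι ι ℂ)
    (h : ∀ i, (ρ i).PosSemidef) : (∑ i, ρ i).PosSemidef := by
  classical
  refine Finset.sum_induction ρ _ (fun a b ha hb => ha.add hb) Matrix.PosSemidef.zero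
    (fun i _ => h i)

lemma density_mix {ι κ : Type} [Fintype ι] [Fintype κ] (p : κ → ℝ) (hp0 : ∀ i, 0 ≤ p i)
    (hp1 : ∑ i, p i = 1) (ρ : κ → Matrix ι ι ℂ) (hρ : ∀ i, IsDensity (ρ i)) :
    IsDensity (∑ i, (p i : ℂ) • ρ i) := by
  constructor
  · exact psd_sum _ fun i => psd_real_smul (hp0 i) (hρ i).1
  · rw [Matrix.trace_sum]
    have : ∀ i, ((p i : ℂ) • ρ i).trace = (p i : ℂ) := by
      intro i
      rw [Matrix.trace_smul, (hρ i).2, smul_eq_mul, mul_one]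
    rw [Finset.sum_congr rfl fun i _ => this i]
    norm_cast

lemma density_conj_unitary {ι : Type} [Fintype ι] [DecidableEq ι] {ρ : Matrix ι ι ℂ}
    (hρ : IsDensity ρ) (W : Matrix.unitaryGroup ι ℂ) :
    IsDensity ((W : Matrix ι ι ℂ) * ρ * Wᴴ) := by
  refine ⟨hρ.1.mul_mul_conjTranspose_same _, ?_⟩
  rw [Matrix.trace_mul_cycle, unit_conj_mul W, Matrix.one_mul, hρ.2]

lemma vnEntropy_aux_nonneg {ι : Type} [Fintype ι] [DecidableEq ι] {ρ : Matrix ι ι ℂ}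
    (hρ : IsDensity ρ) : 0 ≤ vnEntropy ρ := by
  have hsum : ∑ i, hρ.1.1.eigenvalues i = 1 := by
    have h := (trace_eq_sum_eigen hρ.1.1).symm.trans hρ.2
    exact_mod_cast h
  rw [vnEntropy_aux_eq hρ.1.1]
  apply div_nonneg _ (Real.log_nonneg (by norm_num))
  refine Finset.sum_nonneg fun i _ => Real.negMulLog_nonneg (hρ.1.eigenvalues_nonneg i) ?_
  calc hρ.1.1.eigenvalues i ≤ ∑ j, hρ.1.1.eigenvalues j :=
        Finset.single_le_sum (fun j _ => hρ.1.eigenvalues_nonneg j) (Finset.mem_univ i)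
    _ = 1 := hsum

lemma cptp_psd {A B : Type} [Fintype A] [DecidableEq A] [Fintype B]
    {Φ : Matrix A A ℂ →ₗ[ℂ] Matrix B B ℂ} (hΦ : IsCPTP Φ) {ρ : Matrix A A ℂ}
    (hρ : ρ.PosSemidef) : (Φ ρ).PosSemidef := by
  let e : Fin 1 × A ≃ A :=
    { toFun := fun p => p.2
      invFun := fun a => (0, a)
      left_inv := by rintro ⟨r, a⟩; simp [Prod.ext_iff, Subsingleton.elim (0 : Fin 1) r]
      right_inv := fun a => rfl }
  let e' : Fin 1 × B ≃ B :=
    { toFun := fun p => p.2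
      invFun := fun b => (0, b)
      left_inv := by rintro ⟨r, b⟩; simp [Prod.ext_iff, Subsingleton.elim (0 : Fin 1) r]
      right_inv := fun b => rfl }
  have hM : (ρ.submatrix e e).PosSemidef := (Matrix.posSemidef_submatrix_equiv e).mpr hρ
  have h2 := hΦ.1 1 _ hM
  have h3 : Φ ρ = (idTensor Φ (ρ.submatrix e e)).submatrix e'.symm e'.symm := by
    ext b b'
    rfl
  rw [h3]
  exact (Matrix.posSemidef_submatrix_equiv e'.symm).mpr h2

lemma cptp_density {A B : Type} [Fintype A] [DecidableEq A] [Fintype B]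
    {Φ : Matrix A A ℂ →ₗ[ℂ] Matrix B B ℂ} (hΦ : IsCPTP Φ) {ρ : Matrix A A ℂ}
    (hρ : IsDensity ρ) : IsDensity (Φ ρ) :=
  ⟨cptp_psd hΦ hρ.1, by rw [hΦ.2, hρ.2]⟩

lemma vecState_psd {ι : Type} [Fintype ι] (v : ι → ℂ) : (vecState v).PosSemidef := by
  constructor
  · show _ᴴ = _
    ext i j
    simp [vecState, Matrix.conjTranspose_apply, mul_comm]
  · intro x
    exact (Matrix.posSemidef_vecMulVec_self_star v).2 x

lemma vecState_trace {ι : Type} [Fintype ι] (v : ι → ℂ) :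
    (vecState v).trace = ∑ i, v i * star (v i) := rfl

lemma density_vecState_col {n : Type} [Fintype n] [DecidableEq n]
    (W : Matrix.unitaryGroup n ℂ) (k : n) :
    IsDensity (vecState (fun i => (W : Matrix n n ℂ) i k)) := by
  refine ⟨vecState_psd _, ?_⟩
  have h := congrArg (fun X : Matrix n n ℂ => X k k) (unit_conj_mul W)
  simp only [Matrix.mul_apply, Matrix.conjTranspose_apply, Matrix.one_apply_eq] at h
  rw [vecState_trace, ← h]
  refine Finset.sum_congr rfl fun i _ => ?_
  ring

lemma density_spectral {n : Type} [Fintype n] [DecidableEq n] {ρ : Matrix n n ℂ}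
    (hρ : IsDensity ρ) :
    ρ = ∑ k, ((hρ.1.1.eigenvalues k : ℝ) : ℂ)
      • vecState (fun i => (hρ.1.1.eigenvectorUnitary : Matrix n n ℂ) i k) := by
  ext i j
  conv_lhs => rw [hρ.1.1.spectral_theorem]
  rw [Unitary.conjStarAlgAut_apply]
  rw [Matrix.star_eq_conjTranspose]
  rw [Matrix.mul_apply]
  simp only [Matrix.sum_apply, Matrix.smul_apply, vecState, Matrix.of_apply,
    Matrix.conjTranspose_apply, smul_eq_mul]
  refine Finset.sum_congr rfl fun k _ => ?_
  rw [Matrix.mul_diagonal]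
  show (hρ.1.1.eigenvectorUnitary : Matrix n n ℂ) i k * ((hρ.1.1.eigenvalues k : ℝ) : ℂ) * _ = _
  ring

lemma density_pi {n : Type} [Fintype n] [DecidableEq n] [Nonempty n] :
    IsDensity ((Fintype.card n : ℂ)⁻¹ • (1 : Matrix n n ℂ)) := by
  have hc : (0:ℝ) < (Fintype.card n : ℝ) := by
    exact_mod_cast Fintype.card_pos
  constructor
  · have : ((Fintype.card n : ℂ))⁻¹ = (((Fintype.card n : ℝ)⁻¹ : ℝ) : ℂ) := by push_cast; ring
    rw [this]
    exact psd_real_smul (by positivity) Matrix.PosSemidef.one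
  · rw [Matrix.trace_smul, Matrix.trace_one, smul_eq_mul]
    rw [inv_mul_cancel₀]
    exact_mod_cast hc.ne'

lemma density_single {n : Type} [Fintype n] [DecidableEq n] (a : n) :
    IsDensity (vecState (Pi.single a (1:ℂ))) := by
  refine ⟨vecState_psd _, ?_⟩
  rw [vecState_trace]
  simp [Pi.single_apply]

lemma vnEntropy_aux_zero {n : Type} [Fintype n] [DecidableEq n] :
    vnEntropy (0 : Matrix n n ℂ) = 0 := by
  have h : (0 : Matrix n n ℂ).IsHermitian := Matrix.isHermitian_zero
  rw [vnEntropy, dif_pos h]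
  have hz : ∀ i, h.eigenvalues i = 0 := by
    intro i
    have hd := Matrix.IsHermitian.conjStarAlgAut_star_eigenvectorUnitary h
    rw [Unitary.conjStarAlgAut_apply, Matrix.mul_zero, Matrix.zero_mul] at hd
    have h2 := congrArg (fun X : Matrix n n ℂ => X i i) hd
    simp only [Matrix.zero_apply, Matrix.diagonal_apply_eq, Function.comp_apply] at h2
    exact Complex.ofReal_eq_zero.mp h2.symm
  simp [hz]

end AuxProof

/-- For a channel covariant with respect to a group whose input representation
is a unitary 1-design, χ(N) = S(N(π)) − min over pure states ψ of S(N(ψ)). -/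
theorem holevo_of_covariant_oneDesign
    {G A B : Type} [Group G] [Fintype G]
    [Fintype A] [DecidableEq A] [Fintype B] [DecidableEq B]
    (U : G →* Matrix.unitaryGroup A ℂ) (V : G →* Matrix.unitaryGroup B ℂ)
    (N : Matrix A A ℂ →ₗ[ℂ] Matrix B B ℂ) (hN : IsCPTP N)
    (hcov : CovariantChan U V N) (h1 : IsOneDesign U) :
    holevoMap N = vnEntropy (N ((Fintype.card A : ℂ)⁻¹ • (1 : Matrix A A ℂ)))
      - ⨅ ψ : {v : A → ℂ // IsDensity (vecState v)}, vnEntropy (N (vecState ψ.1)) := by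
  by_cases hA : Nonempty A
  case neg =>
    rw [not_nonempty_iff] at hA
    have hE : IsEmpty (Ensemble A) := by
      constructor
      intro e
      rcases Nat.eq_zero_or_pos e.m with hm | hm
      · have hs := e.p_sum
        haveI : IsEmpty (Fin e.m) := by rw [hm]; infer_instance
        rw [Finset.univ_eq_empty, Finset.sum_empty] at hs
        exact one_ne_zero hs.symm
      · have hd := e.ρ_density ⟨0, hm⟩
        have h0 : (e.ρ ⟨0, hm⟩).trace = 0 := by
          simp [Matrix.trace, Finset.univ_eq_empty]
        rw [hd.2] at h0
        exact one_ne_zero h0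
    have hP : IsEmpty {v : A → ℂ // IsDensity (vecState v)} := by
      constructor
      rintro ⟨v, hv⟩
      have h0 : (vecState v).trace = 0 := by simp [Matrix.trace, Finset.univ_eq_empty]
      rw [hv.2] at h0
      exact one_ne_zero h0
    rw [holevoMap, Real.iSup_of_isEmpty, Real.iInf_of_isEmpty]
    have hcard : (Fintype.card A : ℂ) = 0 := by
      simp [Fintype.card_eq_zero]
    rw [hcard, _root_.inv_zero, zero_smul, map_zero, vnEntropy_aux_zero]
    ring
  case pos =>
  have hGpos : (0:ℝ) < Fintype.card G := by exact_mod_cast Fintype.card_pos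
  have hcast : (Complex.ofReal ((Fintype.card G : ℝ)⁻¹)) = (Fintype.card G : ℂ)⁻¹ := by
    push_cast
    ring
  set π : Matrix A A ℂ := (Fintype.card A : ℂ)⁻¹ • (1 : Matrix A A ℂ) with hπdef
  have hπd : IsDensity π := density_pi
  set C : ℝ := vnEntropy (N π) with hCdef
  have hne : Nonempty {v : A → ℂ // IsDensity (vecState v)} :=
    ⟨⟨Pi.single (Classical.arbitrary A) 1, density_single _⟩⟩
  set I : ℝ := ⨅ ψ : {v : A → ℂ // IsDensity (vecState v)}, vnEntropy (N (vecState ψ.1))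
    with hIdef
  have hbddI : BddBelow (Set.range fun ψ : {v : A → ℂ // IsDensity (vecState v)} =>
      vnEntropy (N (vecState ψ.1))) := by
    refine ⟨0, ?_⟩
    rintro x ⟨ψ, rfl⟩
    exact vnEntropy_aux_nonneg (cptp_density hN ψ.2)
  have havg : ∀ ρ : Matrix A A ℂ, IsDensity ρ →
      (∑ g : G, (Complex.ofReal ((Fintype.card G : ℝ)⁻¹))
        • ((V g : Matrix B B ℂ) * N ρ * (V g : Matrix B B ℂ)ᴴ)) = N π := by
    intro ρ hρ
    have hstep : ∀ g : G, (Complex.ofReal ((Fintype.card G : ℝ)⁻¹))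
        • ((V g : Matrix B B ℂ) * N ρ * (V g : Matrix B B ℂ)ᴴ)
        = (Complex.ofReal ((Fintype.card G : ℝ)⁻¹))
          • N ((U g : Matrix A A ℂ) * ρ * (U g : Matrix A A ℂ)ᴴ) := by
      intro g
      rw [hcov g ρ]
    rw [Finset.sum_congr rfl fun g _ => hstep g]
    have hlin : ∑ g : G, (Complex.ofReal ((Fintype.card G : ℝ)⁻¹))
        • N ((U g : Matrix A A ℂ) * ρ * (U g : Matrix A A ℂ)ᴴ)
        = N ((Fintype.card G : ℂ)⁻¹
          • ∑ g : G, (U g : Matrix A A ℂ) * ρ * (U g : Matrix A A ℂ)ᴴ) := by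
      rw [_root_.map_smul, map_sum, Finset.smul_sum, hcast]
    rw [hlin, h1 ρ, hρ.2, one_mul]
  have hmax : ∀ ρ : Matrix A A ℂ, IsDensity ρ → vnEntropy (N ρ) ≤ C := by
    intro ρ hρ
    have hNρ : IsDensity (N ρ) := cptp_density hN hρ
    have hconj : ∀ g : G, IsDensity ((V g : Matrix B B ℂ) * N ρ * (V g : Matrix B B ℂ)ᴴ) :=
      fun g => density_conj_unitary hNρ (V g)
    calc vnEntropy (N ρ)
        = ∑ g : G, (Fintype.card G : ℝ)⁻¹
            * vnEntropy ((V g : Matrix B B ℂ) * N ρ * (V g : Matrix B B ℂ)ᴴ) := by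
          rw [Finset.sum_congr rfl fun g _ => by
            rw [vnEntropy_aux_conj hNρ.1.1 (V g)]]
          rw [Finset.sum_const, nsmul_eq_mul, Finset.card_univ]
          field_simp
      _ ≤ vnEntropy (∑ g : G, (Complex.ofReal ((Fintype.card G : ℝ)⁻¹))
            • ((V g : Matrix B B ℂ) * N ρ * (V g : Matrix B B ℂ)ᴴ)) :=
          vnEntropy_aux_concave (fun _ => (Fintype.card G : ℝ)⁻¹)
            (fun _ => by positivity)
            (by rw [Finset.sum_const, nsmul_eq_mul, Finset.card_univ]; field_simp)
            _ (fun g => (hconj g).1) (fun g => (hconj g).2)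
      _ = C := by rw [havg ρ hρ]
  have hlow : ∀ ρ : Matrix A A ℂ, IsDensity ρ → I ≤ vnEntropy (N ρ) := by
    intro ρ hρ
    set lam := hρ.1.1.eigenvalues with hlamdef
    set W := hρ.1.1.eigenvectorUnitary with hWdef
    have hlam0 : ∀ k, 0 ≤ lam k := fun k => hρ.1.eigenvalues_nonneg k
    have hlam1 : ∑ k, lam k = 1 := by
      have h := (trace_eq_sum_eigen hρ.1.1).symm.trans hρ.2
      exact_mod_cast h
    have hcols : ∀ k, IsDensity (vecState (fun i => (W : Matrix A A ℂ) i k)) :=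
      fun k => density_vecState_col W k
    have hNd : ∀ k, IsDensity (N (vecState (fun i => (W : Matrix A A ℂ) i k))) :=
      fun k => cptp_density hN (hcols k)
    have hconc := vnEntropy_aux_concave lam hlam0 hlam1
      (fun k => N (vecState (fun i => (W : Matrix A A ℂ) i k)))
      (fun k => (hNd k).1) (fun k => (hNd k).2)
    have hdc : ∑ k, ((lam k : ℝ) : ℂ) • N (vecState (fun i => (W : Matrix A A ℂ) i k))
        = N ρ := by
      have hsm : ∀ k : A, ((lam k : ℝ) : ℂ) • N (vecState (fun i => (W : Matrix A A ℂ) i k))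
          = N (((lam k : ℝ) : ℂ) • vecState (fun i => (W : Matrix A A ℂ) i k)) :=
        fun k => (_root_.map_smul N _ _).symm
      rw [Finset.sum_congr rfl fun k _ => hsm k, ← map_sum]
      congr 1
      exact (density_spectral hρ).symm
    have hIle : ∀ k, I ≤ vnEntropy (N (vecState (fun i => (W : Matrix A A ℂ) i k))) :=
      fun k => ciInf_le hbddI ⟨fun i => (W : Matrix A A ℂ) i k, hcols k⟩
    have hfirst : I ≤ ∑ k, lam k * vnEntropy (N (vecState (fun i => (W : Matrix A A ℂ) i k))) := by
      calc I = ∑ k, lam k * I := by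
            rw [← Finset.sum_mul, hlam1, one_mul]
        _ ≤ ∑ k, lam k * vnEntropy (N (vecState (fun i => (W : Matrix A A ℂ) i k))) :=
            Finset.sum_le_sum fun k _ => mul_le_mul_of_nonneg_left (hIle k) (hlam0 k)
    exact hfirst.trans (hconc.trans (le_of_eq (congrArg vnEntropy hdc)))
  have hub : ∀ e : Ensemble A,
      vnEntropy (N (∑ i, (e.p i : ℂ) • e.ρ i)) - ∑ i, e.p i * vnEntropy (N (e.ρ i))
        ≤ C - I := by
    intro e
    have h1' : vnEntropy (N (∑ i, (e.p i : ℂ) • e.ρ i)) ≤ C :=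
      hmax _ (density_mix e.p e.p_nonneg e.p_sum e.ρ e.ρ_density)
    have h2' : I ≤ ∑ i, e.p i * vnEntropy (N (e.ρ i)) := by
      calc I = ∑ i, e.p i * I := by rw [← Finset.sum_mul, e.p_sum, one_mul]
        _ ≤ ∑ i, e.p i * vnEntropy (N (e.ρ i)) :=
            Finset.sum_le_sum fun i _ =>
              mul_le_mul_of_nonneg_left (hlow _ (e.ρ_density i)) (e.p_nonneg i)
    linarith
  have hIC : I ≤ C := by
    obtain ⟨ψ0⟩ := hne
    exact le_trans (ciInf_le hbddI ψ0) (hmax _ ψ0.2)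
  have hlb : ∀ ψ : {v : A → ℂ // IsDensity (vecState v)},
      C - vnEntropy (N (vecState ψ.1)) ≤ holevoMap N := by
    intro ψ
    have hψd : IsDensity (vecState ψ.1) := ψ.2
    set eqg : Fin (Fintype.card G) ≃ G := (Fintype.equivFin G).symm with heqg
    set E : Ensemble A :=
      { m := Fintype.card G
        p := fun _ => (Fintype.card G : ℝ)⁻¹
        p_nonneg := fun _ => by positivity
        p_sum := by
          rw [Finset.sum_const, nsmul_eq_mul]
          simp only [Finset.card_univ, Fintype.card_fin]
          field_simp
        ρ := fun i => (U (eqg i) : Matrix A A ℂ) * vecState ψ.1 * (U (eqg i) : Matrix A A ℂ)ᴴ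
        ρ_density := fun i => density_conj_unitary hψd (U (eqg i)) } with hE
    have hmix : (∑ i, (E.p i : ℂ) • E.ρ i) = π := by
      show ∑ i : Fin (Fintype.card G), (Complex.ofReal ((Fintype.card G : ℝ)⁻¹))
        • ((U (eqg i) : Matrix A A ℂ) * vecState ψ.1 * (U (eqg i) : Matrix A A ℂ)ᴴ) = π
      rw [Equiv.sum_comp eqg (fun g => (Complex.ofReal ((Fintype.card G : ℝ)⁻¹))
        • ((U g : Matrix A A ℂ) * vecState ψ.1 * (U g : Matrix A A ℂ)ᴴ))]
      rw [← Finset.smul_sum, hcast, h1 (vecState ψ.1), hψd.2, one_mul]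
    have hval : ∀ i, vnEntropy (N (E.ρ i)) = vnEntropy (N (vecState ψ.1)) := by
      intro i
      show vnEntropy (N ((U (eqg i) : Matrix A A ℂ) * vecState ψ.1
        * (U (eqg i) : Matrix A A ℂ)ᴴ)) = _
      rw [← hcov (eqg i) (vecState ψ.1)]
      exact vnEntropy_aux_conj (cptp_density hN hψd).1.1 (V (eqg i))
    have hsum2 : ∑ i, E.p i * vnEntropy (N (E.ρ i)) = vnEntropy (N (vecState ψ.1)) := by
      rw [Finset.sum_congr rfl fun i _ => by rw [hval i]]
      show ∑ _i : Fin (Fintype.card G), (Fintype.card G : ℝ)⁻¹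
        * vnEntropy (N (vecState ψ.1)) = _
      rw [Finset.sum_const, nsmul_eq_mul]
      simp only [Finset.card_univ, Fintype.card_fin]
      field_simp
    have hbddS : BddAbove (Set.range fun e : Ensemble A =>
        vnEntropy (N (∑ i, (e.p i : ℂ) • e.ρ i)) - ∑ i, e.p i * vnEntropy (N (e.ρ i))) := by
      refine ⟨C - I, ?_⟩
      rintro x ⟨e, rfl⟩
      exact hub e
    have hle := le_ciSup hbddS E
    rw [hmix, hsum2] at hle
    rw [holevoMap]
    exact hle
  have hsup_le : holevoMap N ≤ C - I := by
    rw [holevoMap]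
    exact Real.iSup_le hub (by linarith)
  have hge : C - I ≤ holevoMap N := by
    have h2 : C - holevoMap N ≤ I := le_ciInf fun ψ => by linarith [hlb ψ]
    linarith
  linarith
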